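/- For all integers n ≥ 0 and k ≥ 1, the poly-Bernoulli numbers with level 2 satisfy the recurrence 𝔅_{2n}^{(k−1)} = 𝔅_{2n}^{(k)} + (2n)! · Σ_{m=0}^{n−1} 4((−1)^{n−m} − (−4)^{n−m}) B_{2n−2m} 𝔅_{2m+2}^{(k)} / ((2n−2m)! (2m+1)!), where B_j denotes the classical Bernoulli numbers. -/

import Mathlib

/-- Stirling numbers of the second kind with level `s`. -/
def stirling2Lev (s : ℕ) : ℕ → ℕ → ℕ
  | 0, 0 => 1
  | 0, _ + 1 => 0
  | _ + 1, 0 => 0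
  | n + 1, k + 1 => stirling2Lev s n k + (k + 1) ^ s * stirling2Lev s n (k + 1)

/-- Poly-Bernoulli numbers with level `2`. -/
def polyBernoulliLev2 (n : ℕ) (k : ℤ) : ℚ :=
  ∑ m ∈ Finset.range (n + 1),
    (stirling2Lev 2 n m : ℚ) * (-1) ^ (n - m) * (Nat.factorial (2 * m) : ℚ)
      / ((2 * m + 1 : ℚ)) ^ k

open PowerSeries Finset

namespace Stmt8Aux

lemma stirling_rec (n j : ℕ) :
    stirling2Lev 2 (n+1) (j+1) = stirling2Lev 2 n j + (j+1)^2 * stirling2Lev 2 n (j+1) := rfl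

lemma stirling_zero_of_lt : ∀ n j : ℕ, n < j → stirling2Lev 2 n j = 0
  | 0, j+1, _ => rfl
  | n+1, j+1, h => by
      have h1 : n < j := by omega
      have h2 : n < j + 1 := by omega
      rw [stirling_rec, stirling_zero_of_lt n j h1, stirling_zero_of_lt n (j+1) h2]
      ring

noncomputable def E (a : ℚ) : ℚ⟦X⟧ := rescale a (PowerSeries.exp ℚ)

lemma coeff_E (a : ℚ) (n : ℕ) : coeff n (E a) = a ^ n / n.factorial := by
  simp [E, coeff_rescale, coeff_exp, algebraMap, div_eq_mul_inv]

lemma E_mul (a b : ℚ) : E a * E b = E (a + b) := exp_mul_exp_eq_exp_add a b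

lemma E_one : E 1 = PowerSeries.exp ℚ := by
  simp [E, rescale_one]

noncomputable def σ : ℚ⟦X⟧ := E (1/2) - E (-(1/2))

lemma hab : E (1/2) * E (-(1/2)) = 1 := by
  rw [E_mul]
  norm_num
  ext n
  rw [coeff_E]
  rcases n with _ | n <;> simp [zero_pow, coeff_one]

lemma coeff_sigma (n : ℕ) : coeff n σ = ((1/2:ℚ)^n - (-(1/2:ℚ))^n) / n.factorial := by
  simp [σ, coeff_E, sub_div]

lemma deriv_E (a : ℚ) : d⁄dX ℚ (E a) = C a * E a := by
  ext n
  rw [coeff_derivative, coeff_C_mul, coeff_E, coeff_E]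
  rw [Nat.factorial_succ]
  have h1 : (n.factorial : ℚ) ≠ 0 := by exact_mod_cast n.factorial_ne_zero
  push_cast
  field_simp
  ring

lemma C_eq_two : (2 : ℚ⟦X⟧) = C 2 := (map_ofNat (C (R := ℚ)) 2).symm

lemma d_mul (f g : ℚ⟦X⟧) : d⁄dX ℚ (f * g) = f * d⁄dX ℚ g + g * d⁄dX ℚ f := by
  rw [Derivation.leibniz]; simp [smul_eq_mul]

lemma d_pow (m : ℕ) (f : ℚ⟦X⟧) :
    d⁄dX ℚ (f ^ (m+1)) = ((m : ℚ⟦X⟧) + 1) * f ^ m * d⁄dX ℚ f := by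
  rw [Derivation.leibniz_pow]
  simp [smul_eq_mul]
  push_cast
  ring

lemma htau : 2 * d⁄dX ℚ σ = E (1/2) + E (-(1/2)) := by
  ext n
  rw [map_add, coeff_E, coeff_E]
  have : coeff n (2 * d⁄dX ℚ σ) = 2 * (coeff (n+1) σ * (n+1)) := by
    rw [C_eq_two, coeff_C_mul, coeff_derivative]
  rw [this, coeff_sigma, Nat.factorial_succ]
  have h1 : ((n+1 : ℕ) : ℚ) ≠ 0 := by positivity
  have h2 : (n.factorial : ℚ) ≠ 0 := by exact_mod_cast n.factorial_ne_zero
  push_cast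
  field_simp
  ring

lemma hsq : (2 * d⁄dX ℚ σ) ^ 2 = σ ^ 2 + 4 := by
  rw [htau, σ]
  linear_combination 4 * hab

lemma d_natCast (n : ℕ) : d⁄dX ℚ ((n : ℚ⟦X⟧)) = 0 := by
  rw [← map_natCast (C (R := ℚ))]; exact derivative_C

lemma d_smulC (c f : ℚ⟦X⟧) (hc : d⁄dX ℚ c = 0) : d⁄dX ℚ (c * f) = c * d⁄dX ℚ f := by
  rw [d_mul, hc]; ring

lemma hdd : 4 * d⁄dX ℚ (d⁄dX ℚ σ) = σ := by
  ext n
  have h4 : (4 : ℚ⟦X⟧) = C 4 := (map_ofNat (C (R := ℚ)) 4).symm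
  rw [h4, coeff_C_mul, coeff_derivative, coeff_derivative, coeff_sigma, coeff_sigma,
    Nat.factorial_succ (n+1), Nat.factorial_succ n]
  have h1 : ((n+1 : ℕ) : ℚ) ≠ 0 := by positivity
  have h2 : ((n+2 : ℕ) : ℚ) ≠ 0 := by positivity
  have h3 : (n.factorial : ℚ) ≠ 0 := by exact_mod_cast n.factorial_ne_zero
  push_cast
  field_simp
  ring

lemma pow_ode (j : ℕ) :
    4 * d⁄dX ℚ (d⁄dX ℚ (σ ^ (2*j+2))) =
      (2*(j : ℚ⟦X⟧)+2) * (2*(j : ℚ⟦X⟧)+1) * (4 * σ ^ (2*j))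
        + (2*(j : ℚ⟦X⟧)+2)^2 * σ ^ (2*j+2) := by
  have hc : d⁄dX ℚ (((2*j+1 : ℕ) : ℚ⟦X⟧) + 1) = 0 := by
    rw [map_add, d_natCast]
    simp
  rw [show 2*j+2 = (2*j+1)+1 from rfl, d_pow, mul_assoc,
    d_smulC _ _ hc, d_mul, show 2*j+1 = (2*j)+1 from rfl, d_pow]
  push_cast
  linear_combination ((2*(j:ℚ⟦X⟧)+2) * σ^(2*j+1)) * hdd
    + ((2*(j:ℚ⟦X⟧)+2)*(2*(j:ℚ⟦X⟧)+1) * σ^(2*j)) * hsq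

lemma E_zero : E 0 = 1 := by
  ext n
  rw [coeff_E]
  rcases n with _ | n <;> simp [coeff_one]

def Fcoef (n j : ℕ) : ℚ := (2*j).factorial * stirling2Lev 2 n j / (2*n).factorial

noncomputable def Fh (j : ℕ) : ℚ⟦X⟧ := mk fun N => if N % 2 = 0 then Fcoef (N/2) j else 0

lemma coeff_Fh_even (n j : ℕ) : coeff (2*n) (Fh j) = Fcoef n j := by
  simp [Fh, coeff_mk, Nat.mul_mod_right, Nat.mul_div_cancel_left _ (by norm_num : 0 < 2)]

lemma coeff_Fh_odd (n j : ℕ) : coeff (2*n+1) (Fh j) = 0 := by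
  rw [Fh, coeff_mk, if_neg (by omega)]

lemma Fh_ode (j : ℕ) :
    4 * d⁄dX ℚ (d⁄dX ℚ (Fh (j+1))) =
      (2*(j : ℚ⟦X⟧)+2) * (2*(j : ℚ⟦X⟧)+1) * (4 * Fh j)
        + (2*(j : ℚ⟦X⟧)+2)^2 * Fh (j+1) := by
  have hc1 : (2*(j : ℚ⟦X⟧)+2) * (2*(j : ℚ⟦X⟧)+1) * 4 = C ((2*(j:ℚ)+2) * (2*(j:ℚ)+1) * 4) := by
    simp only [map_mul, map_add, map_natCast, map_ofNat, map_one]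
  have hc2 : (2*(j : ℚ⟦X⟧)+2)^2 = C (((2*(j:ℚ)+2))^2) := by
    simp only [map_pow, map_mul, map_add, map_natCast, map_ofNat, map_one]
  rw [← mul_assoc, hc1, hc2]
  ext N
  rw [show (4 : ℚ⟦X⟧) = C 4 from (map_ofNat _ _).symm, map_add, coeff_C_mul, coeff_C_mul,
    coeff_C_mul, coeff_derivative, coeff_derivative]
  have hfac : ∀ m : ℕ, ((m.factorial : ℚ)) ≠ 0 := fun m => by exact_mod_cast m.factorial_ne_zero
  rcases Nat.even_or_odd N with ⟨n, hn⟩ | ⟨n, hn⟩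
  · subst hn
    rw [show n + n = 2*n by ring]
    rw [show 2*n + 1 + 1 = 2*(n+1) by ring, coeff_Fh_even, coeff_Fh_even, coeff_Fh_even]
    unfold Fcoef
    rw [stirling_rec]
    rw [show 2*(n+1) = (2*n+1)+1 by ring, Nat.factorial_succ, Nat.factorial_succ]
    rw [show 2*(j+1) = (2*j+1)+1 by ring, Nat.factorial_succ, Nat.factorial_succ]
    have A := hfac (2*n)
    have B := hfac (2*j)
    push_cast
    field_simp
    ring
  · subst hn
    rw [show 2*n+1+1 = 2*(n+1) by ring, show 2*(n+1)+1 = 2*(n+1)+1 from rfl,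
      coeff_Fh_odd, coeff_Fh_odd, coeff_Fh_odd]
    ring

lemma ode_unique (c : ℚ) (f g : ℚ⟦X⟧) (h0 : coeff 0 f = coeff 0 g)
    (h1 : coeff 1 f = coeff 1 g)
    (hode : 4 * d⁄dX ℚ (d⁄dX ℚ f) = 4 * d⁄dX ℚ (d⁄dX ℚ g) + C c * f - C c * g) :
    f = g := by
  ext N
  induction N using Nat.strong_induction_on with
  | _ N ih =>
    match N with
    | 0 => exact h0
    | 1 => exact h1
    | (N+2) =>
      have h := congrArg (coeff N) hode
      rw [show (4 : ℚ⟦X⟧) = C 4 from (map_ofNat _ _).symm, map_sub, map_add, coeff_C_mul,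
        coeff_C_mul, coeff_C_mul, coeff_derivative, coeff_derivative, coeff_derivative,
        coeff_derivative, ih N (by omega)] at h
      simp only [coeff_C_mul, show N+1+1 = N+2 by omega] at h
      push_cast at h
      have e1 : ((N:ℚ)+1+1) * ((N:ℚ)+1) * 4 ≠ 0 := by positivity
      apply mul_left_cancel₀ e1
      linear_combination h

lemma constantCoeff_sigma : constantCoeff σ = 0 := by
  have := coeff_sigma 0
  simpa using this

lemma Fh_eq_pow (j : ℕ) : Fh j = σ ^ (2*j) := by
  induction j with
  | zero =>
    rw [show 2*0 = 0 from rfl, pow_zero]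
    ext N
    rcases Nat.even_or_odd N with ⟨n, hn⟩ | ⟨n, hn⟩ <;> subst hn
    · rw [show n + n = 2*n by ring, coeff_Fh_even]
      rcases n with _ | n
      · simp [Fcoef, stirling2Lev]
      · rw [show (2*(n+1) : ℕ) = (2*n+1)+1 by ring, coeff_one, if_neg (by omega)]
        simp [Fcoef, show stirling2Lev 2 (n+1) 0 = 0 from rfl]
    · rw [coeff_Fh_odd, coeff_one, if_neg (by omega)]
  | succ j ih =>
    rw [show 2*(j+1) = 2*j+2 by ring]
    apply ode_unique (((2*(j:ℚ)+2))^2)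
    · rw [Fh, coeff_mk, if_pos (by omega)]
      rw [coeff_zero_eq_constantCoeff, map_pow, constantCoeff_sigma, zero_pow (by omega)]
      simp [Fcoef, show stirling2Lev 2 0 (j+1) = 0 from rfl, Nat.zero_div]
    · rw [Fh, coeff_mk, if_neg (by omega)]
      rw [show (2*j+2 : ℕ) = (2*j+1)+1 from rfl, pow_succ, coeff_mul,
        Finset.Nat.sum_antidiagonal_eq_sum_range_succ_mk, Finset.sum_range_succ,
        Finset.sum_range_one]
      have h1 : coeff 0 (σ ^ (2*j+1)) = 0 := by
        rw [coeff_zero_eq_constantCoeff, map_pow, constantCoeff_sigma, zero_pow (by omega)]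
      have h2 : coeff 0 σ = 0 := by
        rw [coeff_zero_eq_constantCoeff]; exact constantCoeff_sigma
      simp [h1, h2]
    · have hP := pow_ode j
      rw [← ih] at hP
      have hF := Fh_ode j
      have hc2 : C (((2*(j:ℚ)+2))^2) = (2*(j : ℚ⟦X⟧)+2)^2 := by
        simp only [map_pow, map_add, map_mul, map_natCast, map_ofNat, map_one]
      rw [hc2]
      linear_combination hF - hP

noncomputable def Bq : ℚ⟦X⟧ := bernoulliPowerSeries ℚ
noncomputable def Hh : ℚ⟦X⟧ := 4 * (Bq - rescale 2 Bq) - 2 * X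

lemma rescale_X (r : ℚ) : rescale r (X : ℚ⟦X⟧) = C r * X := by
  ext n
  simp only [coeff_rescale, coeff_X, coeff_C_mul]
  split_ifs with h
  · subst h; ring
  · ring

lemma hB1 : Bq * (E (1/2) * E (1/2) - 1) = X := by
  rw [E_mul, show (1/2 + 1/2 : ℚ) = 1 by norm_num, E_one]
  exact bernoulliPowerSeries_mul_exp_sub_one ℚ

lemma hB2 : rescale 2 Bq * (E (1/2) * E (1/2) * (E (1/2) * E (1/2)) - 1) = 2 * X := by
  have h := congrArg (rescale (2:ℚ)) (bernoulliPowerSeries_mul_exp_sub_one ℚ)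
  rw [map_mul, map_sub, map_one, rescale_X] at h
  have hh : rescale (2:ℚ) (PowerSeries.exp ℚ) = E 2 := rfl
  rw [hh] at h
  rw [E_mul, E_mul, show (1/2 + 1/2 + (1/2 + 1/2) : ℚ) = 2 by norm_num]
  unfold Bq
  rw [h, show (C (R := ℚ)) 2 = (2 : ℚ⟦X⟧) from map_ofNat _ _]

lemma coeff_one_E_sub_one (r : ℚ) : coeff 1 (E r - 1) = r := by
  rw [map_sub, coeff_E, coeff_one]
  norm_num

lemma ne1 : E (1/2) * E (1/2) - 1 ≠ 0 := by
  intro h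
  have := congrArg (coeff 1) h
  rw [E_mul, show (1/2 + 1/2 : ℚ) = 1 by norm_num] at this
  norm_num [coeff_one_E_sub_one] at this

lemma ne2 : E (1/2) * E (1/2) * (E (1/2) * E (1/2)) - 1 ≠ 0 := by
  intro h
  have := congrArg (coeff 1) h
  rw [E_mul, E_mul, show (1/2 + 1/2 + (1/2 + 1/2) : ℚ) = 2 by norm_num] at this
  norm_num [coeff_one_E_sub_one] at this

lemma Hmul : Hh * (2 * d⁄dX ℚ σ) = -(2 * (X * σ)) := by
  rw [htau, Hh, σ]
  apply mul_right_cancel₀ (mul_ne_zero ne1 ne2)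
  set a := E (1/2) with ha
  set b := E (-(1/2)) with hb
  linear_combination (4*(a*a*(a*a) - 1)*(a+b)) * hB1 - (4*(a*a-1)*(a+b)) * hB2
    + (X*(-4*a^5 + 8*a^3 - 4*a)) * hab

lemma key (j : ℕ) : Hh * d⁄dX ℚ (Fh j) = -(2*(j : ℚ⟦X⟧)) * (X * Fh j) := by
  rcases j with _ | j
  · rw [Fh_eq_pow, show 2*0 = 0 from rfl, pow_zero]
    simp
  · rw [Fh_eq_pow, show 2*(j+1) = (2*j+1)+1 by ring, d_pow]
    push_cast
    linear_combination (((j : ℚ⟦X⟧)+1) * σ^(2*j+1)) * Hmul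

lemma coeff_Hh (d : ℕ) : coeff (2*d) Hh = 4*(1 - 4^d) * bernoulli (2*d) / (2*d).factorial := by
  unfold Hh Bq
  rw [map_sub, show (4:ℚ⟦X⟧) = C 4 from (map_ofNat _ _).symm,
    show (2:ℚ⟦X⟧) = C 2 from (map_ofNat _ _).symm, coeff_C_mul, coeff_C_mul, map_sub,
    coeff_rescale, coeff_X, if_neg (by omega : ¬ 2*d = 1)]
  simp only [bernoulliPowerSeries, coeff_mk, Algebra.algebraMap_self, RingHom.id_apply]
  rw [show ((2:ℚ))^(2*d) = 4^d by rw [pow_mul]; norm_num]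
  ring

lemma sum_range_even_split (f : ℕ → ℚ) (n : ℕ) :
    ∑ p ∈ range (2*n+2), f p = ∑ d ∈ range (n+1), (f (2*d) + f (2*d+1)) := by
  induction n with
  | zero => simp [Finset.sum_range_succ]
  | succ n ih =>
    rw [show 2*(n+1)+2 = (2*n+2)+1+1 by ring, Finset.sum_range_succ, Finset.sum_range_succ, ih,
      Finset.sum_range_succ (fun d => f (2*d) + f (2*d+1)) (n+1)]
    rw [show (2*n+2)+1 = 2*n+3 by omega]
    ring_nf

lemma star (n j : ℕ) :
    ∑ d ∈ range (n+1),
        4*(1 - 4^d) * bernoulli (2*d) / (2*d).factorial * (2*((n:ℚ)-d)+2) * Fcoef (n-d+1) j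
      = -(2*(j:ℚ)) * Fcoef n j := by
  have hkey := congrArg (coeff (2*n+1)) (key j)
  rw [coeff_mul] at hkey
  rw [Finset.Nat.sum_antidiagonal_eq_sum_range_succ
    (fun a b => coeff a Hh * coeff b (d⁄dX ℚ (Fh j)))] at hkey
  rw [show (2*n+1).succ = 2*n+2 by omega, sum_range_even_split] at hkey
  rw [show -(2*(j : ℚ⟦X⟧)) = C (-(2*(j:ℚ))) by push_cast [map_neg, map_mul, map_natCast, map_ofNat]; ring,
    coeff_C_mul, coeff_succ_X_mul, coeff_Fh_even] at hkey
  rw [← hkey]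
  apply Finset.sum_congr rfl
  intro d hd
  have hdn : d ≤ n := by simpa using Nat.lt_succ_iff.mp (Finset.mem_range.mp hd)
  have e1 : 2*n+1 - 2*d = 2*(n-d)+1 := by omega
  have e2 : 2*n+1 - (2*d+1) = 2*(n-d) := by omega
  rw [e1, e2, coeff_derivative, coeff_derivative, show 2*(n-d)+1+1 = 2*((n-d)+1) by ring,
    show 2*(n-d)+1 = 2*(n-d)+1 from rfl, coeff_Fh_even, coeff_Fh_odd, coeff_Hh]
  push_cast [Nat.cast_sub hdn]
  ring

lemma hP (a : ℕ) : ((-1:ℚ))^a = if a % 2 = 0 then 1 else -1 := by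
  rcases Nat.even_or_odd a with h | h
  · rw [h.neg_one_pow, if_pos (Nat.even_iff.mp h)]
  · rw [h.neg_one_pow, if_neg (by rw [Nat.odd_iff] at h; omega)]

/-- summand of the statement's right side, with `(2n)!` and the `j`-th term of
`polyBernoulliLev2 (m+1) k` multiplied in -/
noncomputable def tterm (n m j : ℕ) (k : ℤ) : ℚ :=
  (2*n).factorial * (4 * ((-1 : ℚ) ^ (n - m) - (-4 : ℚ) ^ (n - m)) * bernoulli (2 * n - 2 * m)
      * ((stirling2Lev 2 (m+1) j : ℚ) * (-1) ^ (m+1-j) * (Nat.factorial (2 * j) : ℚ)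
          / ((2 * j + 1 : ℚ)) ^ k)
    / ((Nat.factorial (2 * n - 2 * m) : ℚ) * (Nat.factorial (2 * m + 1) : ℚ)))

noncomputable def gterm (n j : ℕ) (d : ℕ) : ℚ :=
  4*(1 - 4^d) * bernoulli (2*d) / (2*d).factorial * (2*((n:ℚ)-d)+2) * Fcoef (n-d+1) j

lemma tterm_eq (n m j : ℕ) (k : ℤ) (hm : m < n) (hj : j ≤ n) :
    tterm n m j k =
      (-((-1:ℚ)^(n+j) * (2*n).factorial / ((2*(j:ℚ)+1))^k)) * gterm n j (n-m) := by
  rcases le_or_gt j (m+1) with hjm | hjm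
  · unfold tterm gterm Fcoef
    rw [show n - (n-m) + 1 = m + 1 by omega, show 2*n - 2*m = 2*(n-m) by omega]
    rw [show ((-4:ℚ)) = (-1) * 4 by norm_num, mul_pow, hP (n-m), hP (m+1-j), hP (n+j)]
    rw [show ((n:ℚ) - ↑(n-m)) = (m:ℚ) by push_cast [Nat.cast_sub hm.le]; ring]
    rw [show 2*(m+1) = (2*m+1)+1 by ring, Nat.factorial_succ (2*m+1)]
    have h1 : ((2*m+1).factorial : ℚ) ≠ 0 := by exact_mod_cast (2*m+1).factorial_ne_zero
    have h2 : ((2*(n-m)).factorial : ℚ) ≠ 0 := by exact_mod_cast (2*(n-m)).factorial_ne_zero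
    have h3 : ((2*j+1:ℚ))^k ≠ 0 := by
      apply zpow_ne_zero; positivity
    have h4 : ((2*j+1:ℕ):ℚ) ≠ 0 := by positivity
    push_cast
    split_ifs <;> first | (exfalso; omega) | (field_simp; ring)
  · have hz : stirling2Lev 2 (m+1) j = 0 := stirling_zero_of_lt _ _ hjm
    have hz2 : stirling2Lev 2 (n - (n-m) + 1) j = 0 := by
      rw [show n - (n-m) + 1 = m + 1 by omega]; exact hz
    unfold tterm gterm Fcoef
    rw [hz, hz2]
    push_cast
    ring

lemma inner_sum (n j : ℕ) (k : ℤ) (hj : j ≤ n) :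
    ∑ m ∈ range n, tterm n m j k =
      (stirling2Lev 2 n j : ℚ) * (-1) ^ (n - j) * (Nat.factorial (2 * j) : ℚ) * (2*j)
        / ((2 * j + 1 : ℚ)) ^ k := by
  set κ : ℚ := -((-1:ℚ)^(n+j) * (2*n).factorial / ((2*(j:ℚ)+1))^k) with hκ
  have h1 : ∑ m ∈ range n, tterm n m j k = κ * ∑ m ∈ range n, gterm n j (n-m) := by
    rw [Finset.mul_sum]
    exact Finset.sum_congr rfl fun m hm => tterm_eq n m j k (Finset.mem_range.mp hm) hj
  have h2 : ∑ m ∈ range n, gterm n j (n-m) = ∑ i ∈ range n, gterm n j (i+1) := by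
    rw [← Finset.sum_range_reflect (fun i => gterm n j (i+1)) n]
    exact Finset.sum_congr rfl fun m hm => by
      have := Finset.mem_range.mp hm
      congr 1
      omega
  have h3 : ∑ i ∈ range n, gterm n j (i+1) = -(2*(j:ℚ)) * Fcoef n j - gterm n j 0 := by
    have := star n j
    rw [Finset.sum_range_succ'] at this
    unfold gterm
    linarith [this]
  have h4 : gterm n j 0 = 0 := by
    unfold gterm
    norm_num
  rw [h1, h2, h3, h4, sub_zero, hκ]
  unfold Fcoef
  rw [hP (n-j), hP (n+j)]
  have h5 : ((2*n).factorial : ℚ) ≠ 0 := by exact_mod_cast (2*n).factorial_ne_zero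
  have h3' : ((2*j+1:ℚ))^k ≠ 0 := by apply zpow_ne_zero; positivity
  push_cast
  split_ifs <;> first | (exfalso; omega) | (field_simp; ring) | field_simp

lemma tterm_zero (n m j : ℕ) (k : ℤ) (h : m + 1 < j) : tterm n m j k = 0 := by
  unfold tterm
  rw [stirling_zero_of_lt _ _ h]
  push_cast
  ring

lemma rhs_expand (n m : ℕ) (k : ℤ) (hm : m < n) :
    (Nat.factorial (2 * n) : ℚ) *
        (4 * ((-1 : ℚ) ^ (n - m) - (-4 : ℚ) ^ (n - m)) * bernoulli (2 * n - 2 * m)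
          * polyBernoulliLev2 (m + 1) k
          / ((Nat.factorial (2 * n - 2 * m) : ℚ) * (Nat.factorial (2 * m + 1) : ℚ)))
      = ∑ j ∈ range (n+1), tterm n m j k := by
  have hsub : range (m+1+1) ⊆ range (n+1) := by
    intro x hx
    simp only [Finset.mem_range] at *
    omega
  rw [← Finset.sum_subset hsub (fun j _ hj => tterm_zero n m j k (by
    simp only [Finset.mem_range] at hj; omega))]
  unfold polyBernoulliLev2
  rw [Finset.mul_sum, Finset.sum_div, Finset.mul_sum]
  apply Finset.sum_congr rfl
  intro j _
  unfold tterm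
  ring

theorem main_result (n : ℕ) (k : ℤ) :
    polyBernoulliLev2 n (k - 1) =
      polyBernoulliLev2 n k + (Nat.factorial (2 * n) : ℚ) *
        ∑ m ∈ Finset.range n,
          4 * ((-1 : ℚ) ^ (n - m) - (-4 : ℚ) ^ (n - m)) * bernoulli (2 * n - 2 * m)
              * polyBernoulliLev2 (m + 1) k
            / ((Nat.factorial (2 * n - 2 * m) : ℚ) * (Nat.factorial (2 * m + 1) : ℚ)) := by
  have hL : polyBernoulliLev2 n (k-1) - polyBernoulliLev2 n k
      = ∑ j ∈ range (n+1), (stirling2Lev 2 n j : ℚ) * (-1) ^ (n - j)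
          * (Nat.factorial (2 * j) : ℚ) * (2*j) / ((2 * j + 1 : ℚ)) ^ k := by
    unfold polyBernoulliLev2
    rw [← Finset.sum_sub_distrib]
    apply Finset.sum_congr rfl
    intro j _
    have hx : ((2*(j:ℚ))+1) ≠ 0 := by positivity
    have hxk : ((2*(j:ℚ))+1)^k ≠ 0 := zpow_ne_zero _ hx
    rw [zpow_sub₀ hx, zpow_one]
    field_simp
    ring
  have hR : (Nat.factorial (2 * n) : ℚ) *
        ∑ m ∈ Finset.range n,
          4 * ((-1 : ℚ) ^ (n - m) - (-4 : ℚ) ^ (n - m)) * bernoulli (2 * n - 2 * m)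
              * polyBernoulliLev2 (m + 1) k
            / ((Nat.factorial (2 * n - 2 * m) : ℚ) * (Nat.factorial (2 * m + 1) : ℚ))
      = ∑ j ∈ range (n+1), (stirling2Lev 2 n j : ℚ) * (-1) ^ (n - j)
          * (Nat.factorial (2 * j) : ℚ) * (2*j) / ((2 * j + 1 : ℚ)) ^ k := by
    rw [Finset.mul_sum]
    rw [Finset.sum_congr rfl (fun m hm => rhs_expand n m k (Finset.mem_range.mp hm))]
    rw [Finset.sum_comm]
    exact Finset.sum_congr rfl (fun j hj => inner_sum n j k (by
      simp only [Finset.mem_range] at hj; omega))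
  linarith [hL, hR]

end Stmt8Aux

/-- Recurrence relating `𝔅_{2n}^{(k−1)}` to `𝔅_{2n}^{(k)}` via the classical
Bernoulli numbers `B_j` (defined by `x/(eˣ−1) = Σ B_j x^j/n!`). -/
theorem stmt_8 (n : ℕ) (k : ℤ) (hk : 1 ≤ k) :
    polyBernoulliLev2 n (k - 1) =
      polyBernoulliLev2 n k + (Nat.factorial (2 * n) : ℚ) *
        ∑ m ∈ Finset.range n,
          4 * ((-1 : ℚ) ^ (n - m) - (-4 : ℚ) ^ (n - m)) * bernoulli (2 * n - 2 * m)
              * polyBernoulliLev2 (m + 1) k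
            / ((Nat.factorial (2 * n - 2 * m) : ℚ) * (Nat.factorial (2 * m + 1) : ℚ)) :=
  Stmt8Aux.main_result n k
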